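/- There exists a constant c > 0 such that the sum over k ≤ T of ∏_{p | k} (1 - 1/p)^{-1} is asymptotic to c·T as T → ∞. -/

import Mathlib

open Filter Finset Asymptotics Topology



noncomputable def hfun (d : ℕ) : ℝ := if Squarefree d then (1:ℝ) / (Nat.totient d) else 0
noncomputable def gfun (d : ℕ) : ℝ := hfun d / d

lemma hfun_nonneg (d : ℕ) : 0 ≤ hfun d := by
  unfold hfun; split <;> positivity

lemma totient_prod_primes : ∀ (t : Finset ℕ), (∀ p ∈ t, p.Prime) →
    Nat.totient (∏ p ∈ t, p) = ∏ p ∈ t, (p - 1) := by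
  intro t
  induction t using Finset.induction_on with
  | empty => intro _; simp
  | @insert a s ha ih =>
    intro hp
    have hpa : a.Prime := hp a (mem_insert_self a s)
    have hps : ∀ p ∈ s, p.Prime := fun p hmem => hp p (mem_insert_of_mem hmem)
    have hco : Nat.Coprime a (∏ p ∈ s, p) :=
      Nat.Coprime.prod_right fun p hmem =>
        (Nat.coprime_primes hpa (hps p hmem)).2 (fun h => ha (h ▸ hmem))
    rw [prod_insert ha, Nat.totient_mul hco, Nat.totient_prime hpa, ih hps, prod_insert ha]

lemma totient_prod_primes_real (t : Finset ℕ) (ht : ∀ p ∈ t, p.Prime) :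
    (Nat.totient (∏ p ∈ t, p) : ℝ) = ∏ p ∈ t, ((p:ℝ) - 1) := by
  rw [totient_prod_primes t ht, Nat.cast_prod]
  exact prod_congr rfl fun p hp => by
    rw [Nat.cast_sub (ht p hp).one_lt.le, Nat.cast_one]



lemma prod_eq_sum_divisors {k : ℕ} (hk : k ≠ 0) :
    ∏ p ∈ k.primeFactors, ((1:ℝ) - 1/(p:ℝ))⁻¹ = ∑ d ∈ k.divisors, hfun d := by
  have h1 : ∀ p ∈ k.primeFactors, ((1:ℝ) - 1/(p:ℝ))⁻¹ = 1/((p:ℝ)-1) + 1 := by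
    intro p hp
    have hp2 : 2 ≤ p := (Nat.prime_of_mem_primeFactors hp).two_le
    have h1' : (1:ℝ) < p := by exact_mod_cast hp2.trans_lt' one_lt_two
    have h0 : (0:ℝ) < p := by linarith
    have hne : (p:ℝ) - 1 ≠ 0 := by linarith
    rw [show (1:ℝ)-1/(p:ℝ) = ((p:ℝ)-1)/p by field_simp, inv_div]
    field_simp; ring
  rw [prod_congr rfl h1, prod_add]
  simp only [prod_const_one, mul_one]
  have h2 : ∑ d ∈ k.divisors, hfun d
      = ∑ d ∈ k.divisors with Squarefree d, (1:ℝ)/(Nat.totient d) := by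
    rw [sum_filter]
    exact sum_congr rfl fun d _ => rfl
  rw [h2, Nat.sum_divisors_filter_squarefree hk]
  have h3 : (UniqueFactorizationMonoid.normalizedFactors k).toFinset = k.primeFactors := by
    rw [Nat.factors_eq]; simp
  rw [h3]
  refine sum_congr rfl fun t ht => ?_
  have htp : ∀ p ∈ t, p.Prime := fun p hp =>
    Nat.prime_of_mem_primeFactors (mem_powerset.1 ht hp)
  rw [show t.val.prod = ∏ p ∈ t, p from by rw [Finset.prod_eq_multiset_prod]; simp, totient_prod_primes_real t htp, one_div, ← prod_inv_distrib]
  exact prod_congr rfl fun p hp => one_div _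



lemma sum_sum_divisors (T : ℕ) :
    ∑ k ∈ Icc 1 T, ∑ d ∈ k.divisors, hfun d = ∑ d ∈ Icc 1 T, ((T/d : ℕ):ℝ) * hfun d := by
  have h1 : ∀ k ∈ Icc 1 T, ∑ d ∈ k.divisors, hfun d
      = ∑ d ∈ Icc 1 T, if d ∣ k then hfun d else 0 := by
    intro k hk
    rw [mem_Icc] at hk
    rw [show k.divisors = {d ∈ Icc 1 T | d ∣ k} from ?_, sum_filter]
    ext d
    simp only [Nat.mem_divisors, mem_filter, mem_Icc]
    constructor
    · rintro ⟨hdk, hk0⟩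
      have hd0 : d ≠ 0 := by rintro rfl; exact hk0 (Nat.eq_zero_of_zero_dvd hdk)
      exact ⟨⟨Nat.one_le_iff_ne_zero.2 hd0,
        le_trans (Nat.le_of_dvd (by omega) hdk) hk.2⟩, hdk⟩
    · rintro ⟨_, hdk⟩; exact ⟨hdk, by omega⟩
  rw [sum_congr rfl h1, sum_comm]
  refine sum_congr rfl fun d hd => ?_
  rw [← sum_filter, sum_const, nsmul_eq_mul]
  congr 1
  rw [show Icc 1 T = Ioc 0 T from Finset.Icc_add_one_left_eq_Ioc 0 T]
  exact_mod_cast Nat.Ioc_filter_dvd_card_eq_div T d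

lemma le_four_mul_totient_sq {d : ℕ} (hd : Squarefree d) : d ≤ 4 * (Nat.totient d)^2 := by
  have hp : ∀ p ∈ d.primeFactors, p.Prime := fun p hp => Nat.prime_of_mem_primeFactors hp
  have hdprod : ∏ p ∈ d.primeFactors, p = d := Nat.prod_primeFactors_of_squarefree hd
  have hφ : Nat.totient d = ∏ p ∈ d.primeFactors, (p-1) := by
    conv_lhs => rw [← hdprod]
    exact totient_prod_primes _ hp
  have hstep : ∀ p ∈ d.primeFactors.erase 2, p ≤ (p-1)^2 := by
    intro p hp'
    have h2 := (hp p (mem_of_mem_erase hp')).two_le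
    have hne := ne_of_mem_erase hp'
    have h3 : 3 ≤ p := by omega
    obtain ⟨q, rfl⟩ : ∃ q, p = q + 1 := ⟨p - 1, by omega⟩
    simp only [Nat.add_sub_cancel]
    nlinarith
  by_cases h2 : 2 ∈ d.primeFactors
  · have hkey : ∏ p ∈ d.primeFactors.erase 2, p ≤ ∏ p ∈ d.primeFactors.erase 2, (p-1)^2 :=
      Finset.prod_le_prod' hstep
    have hd2 : d = 2 * ∏ p ∈ d.primeFactors.erase 2, p := by
      conv_lhs => rw [← hdprod, ← Finset.mul_prod_erase d.primeFactors (fun p => p) h2]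
    have hφ2 : Nat.totient d = ∏ p ∈ d.primeFactors.erase 2, (p-1) := by
      rw [hφ, ← Finset.mul_prod_erase d.primeFactors (fun p => p - 1) h2]
      simp
    calc d = 2 * ∏ p ∈ d.primeFactors.erase 2, p := hd2
      _ ≤ 2 * ∏ p ∈ d.primeFactors.erase 2, (p-1)^2 := by omega
      _ = 2 * (∏ p ∈ d.primeFactors.erase 2, (p-1))^2 := by rw [Finset.prod_pow]
      _ = 2 * (Nat.totient d)^2 := by rw [hφ2]
      _ ≤ 4 * (Nat.totient d)^2 := by omega
  · have hstep' : ∀ p ∈ d.primeFactors, p ≤ (p-1)^2 := by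
      intro p hp'
      exact hstep p (mem_erase.2 ⟨fun h => h2 (h ▸ hp'), hp'⟩)
    calc d = ∏ p ∈ d.primeFactors, p := hdprod.symm
      _ ≤ ∏ p ∈ d.primeFactors, (p-1)^2 := Finset.prod_le_prod' hstep'
      _ = (Nat.totient d)^2 := by rw [Finset.prod_pow, ← hφ]
      _ ≤ 4 * (Nat.totient d)^2 := by omega




lemma hfun_le (d : ℕ) : hfun d ≤ 2 / (d:ℝ) ^ ((1:ℝ)/2) := by
  unfold hfun
  split
  · rename_i h
    have hd0 : d ≠ 0 := h.ne_zero
    have hφ : 0 < Nat.totient d := Nat.totient_pos.mpr (Nat.pos_of_ne_zero hd0)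
    have hφR : (0:ℝ) < Nat.totient d := by exact_mod_cast hφ
    have hdR : (0:ℝ) < d := by exact_mod_cast Nat.pos_of_ne_zero hd0
    have hs : (0:ℝ) < (d:ℝ) ^ ((1:ℝ)/2) := Real.rpow_pos_of_pos hdR _
    rw [div_le_div_iff₀ hφR hs, one_mul]
    have hcast : (d:ℝ) ≤ 4 * (Nat.totient d:ℝ)^2 := by
      exact_mod_cast le_four_mul_totient_sq h
    calc (d:ℝ) ^ ((1:ℝ)/2) ≤ (4 * (Nat.totient d:ℝ)^2) ^ ((1:ℝ)/2) :=
          Real.rpow_le_rpow hdR.le hcast (by norm_num)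
      _ = ((2 * (Nat.totient d:ℝ))^2) ^ ((1:ℝ)/2) := by ring_nf
      _ = 2 * (Nat.totient d:ℝ) := by
          rw [← Real.sqrt_eq_rpow, Real.sqrt_sq (by positivity)]
  · positivity

lemma summable_gfun : Summable gfun := by
  have hb : ∀ d : ℕ, gfun d ≤ 2 * (1 / (d:ℝ) ^ ((3:ℝ)/2)) := by
    intro d
    rcases Nat.eq_zero_or_pos d with rfl | hd
    · simp [gfun, hfun, not_squarefree_zero]
    · have hdR : (0:ℝ) < d := by exact_mod_cast hd
      have h32 : (d:ℝ) ^ ((3:ℝ)/2) = (d:ℝ) ^ ((1:ℝ)/2) * d := by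
        rw [show ((3:ℝ)/2) = (1:ℝ)/2 + 1 by norm_num, Real.rpow_add hdR, Real.rpow_one]
      rw [mul_one_div, h32]
      unfold gfun
      rw [div_le_div_iff₀ hdR (by positivity)]
      calc hfun d * ((d:ℝ) ^ ((1:ℝ)/2) * d) = (hfun d * (d:ℝ) ^ ((1:ℝ)/2)) * d := by ring
        _ ≤ 2 * d := by
            have h1 : hfun d * (d:ℝ) ^ ((1:ℝ)/2) ≤ 2 := by
              have := hfun_le d
              rw [div_eq_mul_inv] at this
              calc hfun d * (d:ℝ) ^ ((1:ℝ)/2)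
                  ≤ 2 * ((d:ℝ) ^ ((1:ℝ)/2))⁻¹ * (d:ℝ) ^ ((1:ℝ)/2) := by
                    apply mul_le_mul_of_nonneg_right this (by positivity)
                _ = 2 := by
                    field_simp
            exact mul_le_mul_of_nonneg_right h1 hdR.le
  apply Summable.of_nonneg_of_le (fun d => div_nonneg (hfun_nonneg d) (Nat.cast_nonneg d)) hb
  exact (Real.summable_one_div_nat_rpow.mpr (by norm_num)).mul_left 2

lemma hfun_tendsto_zero : Tendsto hfun atTop (𝓝 0) := by
  apply squeeze_zero hfun_nonneg hfun_le
  have h1 : Tendsto (fun d : ℕ => (d:ℝ) ^ ((1:ℝ)/2)) atTop atTop :=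
    (tendsto_rpow_atTop (by norm_num)).comp tendsto_natCast_atTop_atTop
  have h2 : Tendsto (fun d : ℕ => ((d:ℝ) ^ ((1:ℝ)/2))⁻¹) atTop (𝓝 0) :=
    h1.inv_tendsto_atTop
  have := h2.const_mul (2:ℝ)
  simpa [div_eq_mul_inv] using this



lemma gfun_nonneg (d : ℕ) : 0 ≤ gfun d := div_nonneg (hfun_nonneg d) (Nat.cast_nonneg d)

lemma main_tendsto : Tendsto
    (fun T : ℕ => (∑ k ∈ Icc 1 T, ∏ p ∈ k.primeFactors, ((1:ℝ) - 1/(p:ℝ))⁻¹) / T)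
    atTop (𝓝 (∑' d, gfun d)) := by
  have hS : ∀ T : ℕ, ∑ k ∈ Icc 1 T, ∏ p ∈ k.primeFactors, ((1:ℝ) - 1/(p:ℝ))⁻¹
      = ∑ d ∈ Icc 1 T, ((T/d : ℕ):ℝ) * hfun d := by
    intro T
    rw [← sum_sum_divisors]
    refine sum_congr rfl fun k hk => prod_eq_sum_divisors ?_
    rw [mem_Icc] at hk; omega
  have hA : Tendsto (fun T : ℕ => ∑ d ∈ Icc 1 T, gfun d) atTop (𝓝 (∑' d, gfun d)) := by
    have h0 : gfun 0 = 0 := by simp [gfun, hfun, not_squarefree_zero]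
    have heq : ∀ T : ℕ, ∑ d ∈ Icc 1 T, gfun d = ∑ d ∈ range (T+1), gfun d := by
      intro T
      rw [show range (T+1) = insert 0 (Icc 1 T) from by ext x; simp [mem_insert]; omega,
        sum_insert (by simp), h0, zero_add]
    have h1 := (summable_gfun.hasSum.tendsto_sum_nat).comp (tendsto_add_atTop_nat 1)
    exact Tendsto.congr (fun T => (heq T).symm) h1
  have hC : Tendsto (fun n : ℕ => (∑ i ∈ range n, hfun i) / (n:ℝ)) atTop (𝓝 0) :=
    hfun_tendsto_zero.cesaro.congr (fun n => inv_mul_eq_div _ _)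
  have hC' : Tendsto (fun T : ℕ => (∑ i ∈ range (T+1), hfun i) / ((T:ℝ)+1)) atTop (𝓝 0) := by
    have h1 := hC.comp (tendsto_add_atTop_nat 1)
    exact h1.congr (fun T => by simp [Function.comp])
  have hD : Tendsto (fun T : ℕ => (∑ i ∈ range (T+1), hfun i) / (T:ℝ)) atTop (𝓝 0) := by
    apply squeeze_zero' (g := fun T : ℕ => 2 * ((∑ i ∈ range (T+1), hfun i) / ((T:ℝ)+1)))
    · exact Eventually.of_forall fun T =>
        div_nonneg (sum_nonneg fun i _ => hfun_nonneg i) (Nat.cast_nonneg T)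
    · filter_upwards [eventually_ge_atTop 1] with T hT
      have hTR : (1:ℝ) ≤ T := by exact_mod_cast hT
      have hsum : 0 ≤ ∑ i ∈ range (T+1), hfun i := sum_nonneg fun i _ => hfun_nonneg i
      rw [← mul_div_assoc, div_le_div_iff₀ (by linarith) (by linarith)]
      nlinarith
    · have := hC'.const_mul (2:ℝ)
      simpa using this
  have hdiff : ∀ᶠ T : ℕ in atTop,
      ‖(∑ k ∈ Icc 1 T, ∏ p ∈ k.primeFactors, ((1:ℝ) - 1/(p:ℝ))⁻¹) / T
        - ∑ d ∈ Icc 1 T, gfun d‖ ≤ (∑ i ∈ range (T+1), hfun i) / (T:ℝ) := by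
    filter_upwards [eventually_ge_atTop 1] with T hT
    have hT0 : (0:ℝ) < T := by exact_mod_cast hT
    have hterm : ∀ d ∈ Icc 1 T,
        |((T/d : ℕ):ℝ) * hfun d / T - gfun d| ≤ hfun d / T := by
      intro d hd
      rw [mem_Icc] at hd
      have hd0 : (0:ℝ) < d := by exact_mod_cast hd.1
      have hub' : ((T/d : ℕ):ℝ) * d ≤ T := by
        rw [← le_div_iff₀ hd0]; exact Nat.cast_div_le
      have hdn : d ≠ 0 := by omega
      have h1 : d * (T/d) + T % d = T := Nat.div_add_mod T d
      have h2 : T % d < d := Nat.mod_lt T (by omega)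
      have h1R : (d:ℝ) * ((T/d:ℕ):ℝ) + ((T % d : ℕ):ℝ) = T := by exact_mod_cast h1
      have h2R : ((T % d : ℕ):ℝ) < d := by exact_mod_cast h2
      have hlb' : (T:ℝ) - d < d * ((T/d:ℕ):ℝ) := by linarith
      have hup : ((T/d:ℕ):ℝ)/T ≤ 1/d := by
        rw [div_le_div_iff₀ hT0 hd0]; nlinarith
      have hlo : 1/d - 1/T ≤ ((T/d:ℕ):ℝ)/T := by
        rw [div_sub_div _ _ hd0.ne' hT0.ne', div_le_div_iff₀ (mul_pos hd0 hT0) hT0]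
        nlinarith
      have habs : |((T/d : ℕ):ℝ)/T - 1/d| ≤ 1/T := by
        rw [abs_le]
        constructor
        · linarith
        · have : (0:ℝ) ≤ 1/T := by positivity
          linarith
      calc |((T/d : ℕ):ℝ) * hfun d / T - gfun d|
          = |((T/d : ℕ):ℝ)/T - 1/d| * hfun d := by
            rw [show ((T/d : ℕ):ℝ) * hfun d / T - gfun d
                = (((T/d : ℕ):ℝ)/T - 1/d) * hfun d from by
              unfold gfun; field_simp]
            rw [abs_mul, abs_of_nonneg (hfun_nonneg d)]
        _ ≤ (1/T) * hfun d := mul_le_mul_of_nonneg_right habs (hfun_nonneg d)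
        _ = hfun d / T := by ring
    calc ‖(∑ k ∈ Icc 1 T, ∏ p ∈ k.primeFactors, ((1:ℝ) - 1/(p:ℝ))⁻¹) / T
          - ∑ d ∈ Icc 1 T, gfun d‖
        = |∑ d ∈ Icc 1 T, (((T/d : ℕ):ℝ) * hfun d / T - gfun d)| := by
          rw [hS T, sum_div, ← sum_sub_distrib, Real.norm_eq_abs]
      _ ≤ ∑ d ∈ Icc 1 T, |((T/d : ℕ):ℝ) * hfun d / T - gfun d| :=
          Finset.abs_sum_le_sum_abs _ _
      _ ≤ ∑ d ∈ Icc 1 T, hfun d / T := sum_le_sum hterm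
      _ = (∑ d ∈ Icc 1 T, hfun d) / T := by rw [sum_div]
      _ ≤ (∑ i ∈ range (T+1), hfun i) / T := by
          have hsub : Icc 1 T ⊆ range (T+1) := by
            intro x hx; rw [mem_Icc] at hx; rw [mem_range]; omega
          have hle := Finset.sum_le_sum_of_subset_of_nonneg hsub (fun i _ _ => hfun_nonneg i)
          exact div_le_div_of_nonneg_right hle hT0.le
  have hzero := squeeze_zero_norm' hdiff hD
  have hsumt := hA.add hzero
  rw [add_zero] at hsumt
  exact hsumt.congr (fun T => by ring)


/-- There is `c > 0` with `∑_{k ≤ T} ∏_{p | k} (1 - 1/p)⁻¹ ∼ c T` as `T → ∞`. -/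
theorem stmt_6 : ∃ c : ℝ, 0 < c ∧
    Asymptotics.IsEquivalent Filter.atTop
      (fun T : ℕ => ∑ k ∈ Finset.Icc 1 T, ∏ p ∈ k.primeFactors, ((1 : ℝ) - 1 / p)⁻¹)
      (fun T : ℕ => c * T) := by
  set c : ℝ := ∑' d, gfun d with hc
  have hg1 : gfun 1 = 1 := by
    simp [gfun, hfun, squarefree_one, Nat.totient_one]
  have hcpos : 0 < c := by
    have h1 : gfun 1 ≤ c := Summable.le_tsum summable_gfun 1 (fun i _ => gfun_nonneg i)
    rw [hg1] at h1
    linarith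
  refine ⟨c, hcpos, ?_⟩
  rw [Asymptotics.isEquivalent_iff_tendsto_one ?hz]
  case hz =>
    filter_upwards [eventually_ge_atTop 1] with T hT
    have : (0:ℝ) < T := by exact_mod_cast hT
    positivity
  have h1 := main_tendsto.div_const c
  rw [div_self hcpos.ne'] at h1
  apply h1.congr
  intro T
  simp only [Pi.div_apply]
  rw [div_div, mul_comm]
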